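/- Let T be a triangulated category and let C1, C2 be strictly full triangulated subcategories of T such that Hom_T(X, Y) = 0 for every object X of C2 and every object Y of C1. If the inclusion functor of C2 into T admits a right adjoint and C1 consists exactly of the objects D of T with Hom_T(X, D) = 0 for all objects X of C2, then for every object D of T there exists a distinguished triangle B ⟶ D ⟶ A ⟶ B⟦1⟧ with B in C2 and A in C1. -/

import Mathlib

open CategoryTheory Category Limits Pretriangulated

universe v u

variable (T : Type u) [Category.{v} T] [HasZeroObject T] [HasShift T ℤ]
  [Preadditive T] [∀ n : ℤ, (shiftFunctor T n).Additive] [Pretriangulated T]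

/-- A strictly full triangulated subcategory of `T`, encoded as a predicate on objects:
it contains the zero objects, is closed under isomorphisms, is closed under shifts in
both directions, and is closed under extensions. -/
structure IsTriangulatedSubcategory (P : T → Prop) : Prop where
  zero : ∀ X : T, IsZero X → P X
  isoClosed : ∀ ⦃X Y : T⦄, (X ≅ Y) → P X → P Y
  shift : ∀ (X : T) (n : ℤ), P X → P (X⟦n⟧)
  ext₂ : ∀ Tr : Triangle T, (Tr ∈ distTriang T) → P Tr.obj₁ → P Tr.obj₃ → P Tr.obj₂

/-- If `C₁`, `C₂` are strictly full triangulated subcategories with no nonzero morphisms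
from `C₂` to `C₁`, the inclusion functor of `C₂` into `T` admits a right adjoint and `C₁`
is the right orthogonal of `C₂`, then every object of `T` fits into a distinguished
triangle `B ⟶ D ⟶ A ⟶ B⟦1⟧` with `B ∈ C₂` and `A ∈ C₁`. -/
theorem right_adjoint_gives_decomposition_triangles [IsTriangulated T]
    (C1 C2 : T → Prop)
    (hC1 : IsTriangulatedSubcategory T C1) (hC2 : IsTriangulatedSubcategory T C2)
    (hHom : ∀ (X Y : T), C2 X → C1 Y → ∀ f : X ⟶ Y, f = 0)
    (hadj : (ObjectProperty.ι C2).IsLeftAdjoint)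
    (hperp : ∀ D : T, C1 D ↔ ∀ X : T, C2 X → ∀ f : X ⟶ D, f = 0) :
    ∀ D : T, ∃ (B A : T) (f : B ⟶ D) (g : D ⟶ A) (h : A ⟶ B⟦(1 : ℤ)⟧),
      C2 B ∧ C1 A ∧ (Triangle.mk f g h ∈ distTriang T) := by
  intro D
  obtain ⟨G, ⟨adj⟩⟩ := hadj
  set B : T := (G.obj D).obj with hB
  have hB2 : C2 B := (G.obj D).property
  set f : B ⟶ D := adj.counit.app D with hf
  -- composition with f is bijective on Hom(X, -) for X ∈ C2
  have hbij : ∀ (X : T), C2 X → Function.Bijective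
      (fun (g : X ⟶ B) => g ≫ f) := by
    intro X hX
    let X' : ObjectProperty.FullSubcategory C2 := ⟨X, hX⟩
    let e : (X ⟶ B) ≃ (X ⟶ D) :=
      (InducedCategory.homEquiv (X := X') (Y := G.obj D)).symm.trans (adj.homEquiv X' D).symm
    have key : ∀ g : X ⟶ B, e g = g ≫ f := fun g => by
      simp only [e, Equiv.trans_apply]
      rw [Adjunction.homEquiv_counit]; rfl
    have hb := e.bijective
    rw [show ⇑e = fun g => g ≫ f from funext key] at hb
    exact hb
  obtain ⟨A, g, h, hT⟩ := Pretriangulated.distinguished_cocone_triangle f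
  refine ⟨B, A, f, g, h, hB2, ?_, hT⟩
  rw [hperp]
  intro X hX φ
  -- first show φ ≫ h = 0
  have hinj : ∀ (u : X ⟶ B⟦(1:ℤ)⟧), u ≫ f⟦(1:ℤ)⟧' = 0 → u = 0 := by
    intro u hu
    have e : X⟦(-1:ℤ)⟧⟦(1:ℤ)⟧ ≅ X :=
      (shiftEquiv T (1:ℤ)).counitIso.app X
    set v : X⟦(-1:ℤ)⟧ ⟶ B := (shiftFunctor T (1:ℤ)).preimage (e.hom ≫ u) with hv
    have hv1 : v⟦(1:ℤ)⟧' = e.hom ≫ u := (shiftFunctor T (1:ℤ)).map_preimage _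
    have hv0 : v = 0 := by
      have : (v ≫ f)⟦(1:ℤ)⟧' = 0 := by
        rw [Functor.map_comp, hv1, assoc, hu, comp_zero]
      have hvf : v ≫ f = 0 := (shiftFunctor T (1:ℤ)).map_injective (by
        rw [this, Functor.map_zero])
      exact (hbij _ (hC2.shift X (-1) hX)).1 (by simpa using hvf)
    rw [← cancel_epi e.hom, ← hv1, hv0, Functor.map_zero, comp_zero]
  have h31 : h ≫ f⟦(1:ℤ)⟧' = 0 := comp_distTriang_mor_zero₃₁ _ hT
  have hφh : φ ≫ h = 0 := hinj _ (by rw [assoc, h31, comp_zero])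
  obtain ⟨ψ, hψ⟩ := Triangle.coyoneda_exact₃ _ hT φ hφh
  obtain ⟨χ, hχ⟩ := (hbij X hX).2 ψ
  have h12 := comp_distTriang_mor_zero₁₂ _ hT
  simp only [Triangle.mk_mor₁, Triangle.mk_mor₂] at h12
  rw [hψ, ← hχ]
  simp only [Triangle.mk_mor₂]
  exact (assoc χ f g).trans ((congrArg (χ ≫ ·) h12).trans comp_zero)
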